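/- arXiv:2205.05643 — 5 statements merged into one kernel-verified Lean document; each statement's English description precedes it below -/
import Mathlib

section
/- For every primitive string s of length n over a finite alphabet Σ and every context adaptive ordering (π_x), the relation ≺ is a strict linear order on the set {R_0, …, R_{n−1}} of cyclic rotations of s: it is irreflexive, transitive, and any two distinct rotations are ≺-comparable (exactly one of u ≺ v, v ≺ u holds). -/
open scoped Classical

variable {A : Type*}

/-- Longest common prefix of two lists. -/
def lcp [DecidableEq A] : List A → List A → List A
  | a :: as, b :: bs => if a = b then a :: lcp as bs else []
  | _, _ => []

/-- A string is primitive if its cyclic rotations are pairwise distinct. -/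
def Primitive (s : List A) : Prop :=
  ∀ i j, i < s.length → j < s.length → s.rotate i = s.rotate j → i = j

/-- The context-adaptive comparison relation on rotations: letting `x` be the
longest common prefix of `u` and `v`, we have `u ≺ v` iff the symbol of `u`
just after `x` is `π x`-smaller than the corresponding symbol of `v`. -/
def Prec [DecidableEq A] (π : List A → A → A → Prop) (u v : List A) : Prop :=
  ∃ a b, u[(lcp u v).length]? = some a ∧ v[(lcp u v).length]? = some b ∧
    π (lcp u v) a b

lemma lcp_self [DecidableEq A] (u : List A) : lcp u u = u := by
  induction u with
  | nil => rfl
  | cons a as ih => simp [lcp, ih]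

lemma lcp_comm [DecidableEq A] (u v : List A) : lcp u v = lcp v u := by
  induction u generalizing v with
  | nil => cases v <;> rfl
  | cons a as ih =>
    cases v with
    | nil => rfl
    | cons b bs =>
      by_cases h : a = b
      · subst h; simp [lcp, ih]
      · simp [lcp, h, Ne.symm h]

lemma lcp_take [DecidableEq A] (u v : List A) :
    u.take (lcp u v).length = lcp u v ∧ v.take (lcp u v).length = lcp u v := by
  induction u generalizing v with
  | nil => cases v <;> simp [lcp]
  | cons a as ih =>
    cases v with
    | nil => simp [lcp]
    | cons b bs =>
      by_cases h : a = b
      · subst h; simpa [lcp] using ih bs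
      · simp [lcp, h]

lemma lcp_getElem_ne [DecidableEq A] (u v : List A) (h : u ≠ v) :
    u[(lcp u v).length]? ≠ v[(lcp u v).length]? := by
  induction u generalizing v with
  | nil =>
    cases v with
    | nil => exact absurd rfl h
    | cons b bs => simp [lcp]
  | cons a as ih =>
    cases v with
    | nil => simp [lcp]
    | cons b bs =>
      by_cases hab : a = b
      · subst hab
        have : as ≠ bs := fun hh => h (by rw [hh])
        simpa [lcp] using ih bs this
      · simp [lcp, hab]

lemma lcp_spec [DecidableEq A] (u v : List A) (l : ℕ)
    (h1 : u.take l = v.take l) (h2 : u[l]? ≠ v[l]?) : lcp u v = u.take l := by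
  induction u generalizing v l with
  | nil =>
    cases v with
    | nil => simp at h2
    | cons b bs =>
      cases l with
      | zero => rfl
      | succ m => simp at h1
  | cons a as ih =>
    cases v with
    | nil =>
      cases l with
      | zero => rfl
      | succ m => simp at h1
    | cons b bs =>
      cases l with
      | zero =>
        have : a ≠ b := by simpa using h2
        simp [lcp, this]
      | succ m =>
        simp only [List.take_succ_cons, List.cons.injEq] at h1
        obtain ⟨hab, hrest⟩ := h1
        subst hab
        have h2' : as[m]? ≠ bs[m]? := by simpa using h2
        simp [lcp, ih bs m hrest h2']

lemma take_getElem?_eq {u v : List A} {l i : ℕ} (h : u.take l = v.take l)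
    (hi : i < l) : u[i]? = v[i]? := by
  have := congrArg (fun t : List A => t[i]?) h
  simpa [List.getElem?_take, hi] using this

lemma prec_trans [DecidableEq A] (π : List A → A → A → Prop)
    (hπ : ∀ x, IsStrictTotalOrder A (π x)) {u v w : List A}
    (huv : Prec π u v) (hvw : Prec π v w) : Prec π u w := by
  obtain ⟨a, b, ha, hb, hab⟩ := huv
  obtain ⟨b', c, hb', hc, hbc⟩ := hvw
  set l1 := (lcp u v).length with hl1
  set l2 := (lcp v w).length with hl2
  have htuv := lcp_take u v
  have htvw := lcp_take v w
  have huv1 : u.take l1 = v.take l1 := htuv.1.trans htuv.2.symm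
  have hvw2 : v.take l2 = w.take l2 := htvw.1.trans htvw.2.symm
  have hne_ab : a ≠ b := fun h => (hπ (lcp u v)).irrefl b (h ▸ hab)
  have hne_bc : b' ≠ c := fun h => (hπ (lcp v w)).irrefl c (h ▸ hbc)
  rcases lt_trichotomy l1 l2 with hlt | heq | hgt
  · -- lcp u w = lcp u v
    have hwl1 : w[l1]? = v[l1]? := (take_getElem?_eq hvw2 hlt).symm
    have hne : u[l1]? ≠ w[l1]? := by
      rw [hwl1, ha, hb]; simp [hne_ab]
    have htake : u.take l1 = w.take l1 := by
      calc u.take l1 = v.take l1 := huv1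
        _ = (v.take l2).take l1 := by rw [List.take_take, min_eq_left hlt.le]
        _ = (w.take l2).take l1 := by rw [hvw2]
        _ = w.take l1 := by rw [List.take_take, min_eq_left hlt.le]
    have hlcp : lcp u w = lcp u v := by
      rw [lcp_spec u w l1 htake hne, htuv.1]
    refine ⟨a, b, ?_, ?_, ?_⟩ <;> rw [hlcp]
    · exact ha
    · rw [hwl1]; exact hb
    · exact hab
  · -- equal: contexts coincide, use transitivity of π
    have hx : lcp u v = lcp v w := by
      rw [← htuv.2, ← htvw.1, ← hl1, ← hl2, heq]
    have hbb : b = b' := by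
      have : some b = some b' := by rw [← hb, ← hb', heq]
      exact Option.some_injective _ this
    have hac : π (lcp u v) a c := (hπ (lcp u v)).trans a b c hab (by rw [hx, hbb]; exact hbc)
    have hne_ac : a ≠ c := fun h => (hπ (lcp u v)).irrefl c (h ▸ hac)
    have hwl1 : w[l1]? = some c := by rw [heq]; exact hc
    have hne : u[l1]? ≠ w[l1]? := by rw [ha, hwl1]; simp [hne_ac]
    have htake : u.take l1 = w.take l1 := by
      rw [huv1, heq, hvw2]
    have hlcp : lcp u w = lcp u v := by
      rw [lcp_spec u w l1 htake hne, htuv.1]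
    exact ⟨a, c, by rw [hlcp]; exact ha, by rw [hlcp]; exact hwl1, by rw [hlcp]; exact hac⟩
  · -- lcp u w = lcp v w
    have hul2 : u[l2]? = v[l2]? := take_getElem?_eq huv1 hgt
    have hne : u[l2]? ≠ w[l2]? := by
      rw [hul2, hb', hc]; simp [hne_bc]
    have huv2 : u.take l2 = v.take l2 := by
      calc u.take l2 = (u.take l1).take l2 := by rw [List.take_take, min_eq_left hgt.le]
        _ = (v.take l1).take l2 := by rw [huv1]
        _ = v.take l2 := by rw [List.take_take, min_eq_left hgt.le]
    have htake : u.take l2 = w.take l2 := huv2.trans hvw2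
    have hlcp : lcp u w = lcp v w := by
      rw [lcp_spec u w l2 htake hne, huv2, htvw.1]
    refine ⟨b', c, ?_, ?_, ?_⟩ <;> rw [hlcp]
    · rw [hul2]; exact hb'
    · exact hc
    · exact hbc

lemma prec_irrefl [DecidableEq A] (π : List A → A → A → Prop) (u : List A) :
    ¬ Prec π u u := by
  rintro ⟨a, b, ha, hb, hab⟩
  rw [lcp_self] at ha
  simp at ha

lemma prec_total [DecidableEq A] (π : List A → A → A → Prop)
    (hπ : ∀ x, IsStrictTotalOrder A (π x)) {u v : List A}
    (hlen : u.length = v.length) (h : u ≠ v) : Prec π u v ∨ Prec π v u := by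
  have hne := lcp_getElem_ne u v h
  set l := (lcp u v).length with hl
  have hlt : l < u.length := by
    by_contra hge
    push_neg at hge
    have h1 : u[l]? = none := by
      rw [List.getElem?_eq_none_iff]; exact hge
    have h2 : v[l]? = none := by
      rw [List.getElem?_eq_none_iff]; omega
    exact hne (h1.trans h2.symm)
  have hltv : l < v.length := by omega
  have hlcp : lcp v u = lcp u v := lcp_comm v u
  have ha : u[l]? = some (u[l]'hlt) := List.getElem?_eq_getElem hlt
  have hb : v[l]? = some (v[l]'hltv) := List.getElem?_eq_getElem hltv
  set a := u[l]'hlt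
  set b := v[l]'hltv
  have hab : a ≠ b := fun hh => hne (by rw [ha, hb, hh])
  haveI := hπ (lcp u v)
  rcases trichotomous_of (π (lcp u v)) a b with hp | hp | hp
  · exact Or.inl ⟨a, b, ha, hb, hp⟩
  · exact absurd hp hab
  · exact Or.inr ⟨b, a, by rw [hlcp]; exact hb, by rw [hlcp]; exact ha, by rw [hlcp]; exact hp⟩

lemma prec_asymm [DecidableEq A] (π : List A → A → A → Prop)
    (hπ : ∀ x, IsStrictTotalOrder A (π x)) {u v : List A}
    (h : Prec π u v) : ¬ Prec π v u := fun h' =>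
  prec_irrefl π u (prec_trans π hπ h h')

/-- for every primitive string `s` and every context adaptive
ordering `π`, the relation `≺` is a strict linear order on the cyclic rotations
of `s`: irreflexive, transitive, and any two distinct rotations are comparable
(exactly one of `u ≺ v`, `v ≺ u` holds). -/
theorem stmt0 [Fintype A] [DecidableEq A]
    (π : List A → A → A → Prop) (hπ : ∀ x, IsStrictTotalOrder A (π x))
    (s : List A) (hs : 1 ≤ s.length) (hprim : Primitive s) :
    (∀ i < s.length, ¬ Prec π (s.rotate i) (s.rotate i)) ∧
    (∀ i < s.length, ∀ j < s.length, ∀ k < s.length,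
      Prec π (s.rotate i) (s.rotate j) → Prec π (s.rotate j) (s.rotate k) →
      Prec π (s.rotate i) (s.rotate k)) ∧
    (∀ i < s.length, ∀ j < s.length, s.rotate i ≠ s.rotate j →
      (Prec π (s.rotate i) (s.rotate j) ∧ ¬ Prec π (s.rotate j) (s.rotate i)) ∨
      (Prec π (s.rotate j) (s.rotate i) ∧ ¬ Prec π (s.rotate i) (s.rotate j))) := by
  refine ⟨fun i _ => prec_irrefl π _, fun i _ j _ k _ h1 h2 => prec_trans π hπ h1 h2,
    fun i _ j _ hne => ?_⟩
  have hlen : (s.rotate i).length = (s.rotate j).length := by simp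
  rcases prec_total π hπ hlen hne with h | h
  · exact Or.inl ⟨h, prec_asymm π hπ h⟩
  · exact Or.inr ⟨h, prec_asymm π hπ h⟩
end

section
/- For every primitive string s over Σ, every context adaptive ordering, and every string x over Σ, the set of rotations of s having x as a prefix is an interval with respect to ≺: if u ≺ v ≺ w and both u and w have x as a prefix, then v has x as a prefix. -/
open scoped Classical

variable {A : Type*}

theorem pget' {B : Type*} {l₁ l₂ : List B} (h : l₁ <+: l₂) {n : ℕ} (hn : n < l₁.length) :
    l₂[n]? = l₁[n]? := by
  obtain ⟨t, rfl⟩ := h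
  rw [List.getElem?_append, if_pos hn]

theorem lcp_prefix_left [DecidableEq A] : ∀ u v : List A, lcp u v <+: u
  | [], _ => by simp [lcp]
  | _ :: _, [] => by simp [lcp]
  | a :: as, b :: bs => by
    simp only [lcp]
    split
    · exact (List.cons_prefix_cons).2 ⟨rfl, lcp_prefix_left as bs⟩
    · exact List.nil_prefix

theorem lcp_prefix_right [DecidableEq A] : ∀ u v : List A, lcp u v <+: v
  | [], _ => by simp [lcp]
  | _ :: _, [] => by simp [lcp]
  | a :: as, b :: bs => by
    simp only [lcp]
    split
    · next h => exact (List.cons_prefix_cons).2 ⟨h, lcp_prefix_right as bs⟩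
    · exact List.nil_prefix

theorem main [DecidableEq A]
    (π : List A → A → A → Prop) (hπ : ∀ x, IsStrictTotalOrder A (π x))
    (x u v w : List A)
    (huv : ∃ a b, u[(lcp u v).length]? = some a ∧ v[(lcp u v).length]? = some b ∧
      π (lcp u v) a b)
    (hvw : ∃ a b, v[(lcp v w).length]? = some a ∧ w[(lcp v w).length]? = some b ∧
      π (lcp v w) a b)
    (hxu : x <+: u) (hxw : x <+: w) : x <+: v := by
  obtain ⟨a, b, ha, hb, hab⟩ := huv
  obtain ⟨b', c, hb', hc, hbc⟩ := hvw
  set p := lcp u v with hp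
  set q := lcp v w with hq
  have hpu : p <+: u := lcp_prefix_left u v
  have hpv : p <+: v := lcp_prefix_right u v
  have hqv : q <+: v := lcp_prefix_left v w
  have hqw : q <+: w := lcp_prefix_right v w
  -- if x.length ≤ p.length, then x <+: p <+: v, done
  by_cases hlp : x.length ≤ p.length
  · exact (List.prefix_of_prefix_length_le hxu hpu hlp).trans hpv
  by_cases hlq : x.length ≤ q.length
  · exact (List.prefix_of_prefix_length_le hxw hqw hlq).trans hqv
  push_neg at hlp hlq
  -- p and q are prefixes of x
  have hpx : p <+: x := List.prefix_of_prefix_length_le hpu hxu hlp.le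
  have hqx : q <+: x := List.prefix_of_prefix_length_le hqw hxw hlq.le
  rcases lt_trichotomy p.length q.length with h | h | h
  · -- v[p.len] = q[p.len] = x[p.len] = u[p.len], so a = b, contradiction
    have e1 : v[p.length]? = q[p.length]? := pget' hqv h
    have e2 : q[p.length]? = x[p.length]? := (pget' hqx h).symm
    have e3 : x[p.length]? = u[p.length]? := (pget' hxu hlp).symm
    have : a = b := by
      have := hb.symm.trans (e1.trans (e2.trans (e3.trans ha)))
      exact (Option.some_inj.1 this).symm
    subst this
    exact ((hπ p).irrefl a hab).elim
  · -- p = q; then a = c and b = b', transitivity gives contradiction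
    have hpq : p = q :=
      List.IsPrefix.eq_of_length (List.prefix_of_prefix_length_le hpx hqx h.le) <|
        ((List.prefix_of_prefix_length_le hpx hqx h.le).length_le.antisymm
          (h ▸ le_refl q.length))
    have hbb' : b = b' := by
      have := hb.symm.trans (hpq ▸ hb')
      exact Option.some_inj.1 this
    have hac : a = c := by
      have e1 : u[p.length]? = x[p.length]? := pget' hxu hlp
      have e2 : x[q.length]? = w[q.length]? := (pget' hxw hlq).symm
      have := ha.symm.trans ((e1.trans (hpq ▸ (e2.trans hc))))
      exact Option.some_inj.1 this
    subst hbb'; subst hac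
    exact ((hπ p).irrefl a ((hπ p).trans _ _ _ hab (hpq ▸ hbc))).elim
  · -- q.length < p.length: v[q.len] = p[q.len] = x[q.len] = w[q.len], so b' = c
    have e1 : v[q.length]? = p[q.length]? := pget' hpv h
    have e2 : p[q.length]? = x[q.length]? := (pget' hpx h).symm
    have e3 : x[q.length]? = w[q.length]? := (pget' hxw hlq).symm
    have : b' = c := by
      have := hb'.symm.trans (e1.trans (e2.trans (e3.trans hc)))
      exact Option.some_inj.1 this
    subst this
    exact ((hπ q).irrefl b' hbc).elim

/-- the set of rotations of `s` having `x` as a prefix is an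
interval with respect to `≺`: if `u ≺ v ≺ w` and both `u` and `w` have `x` as
a prefix, then `v` has `x` as a prefix. -/
theorem stmt1 [Fintype A] [DecidableEq A]
    (π : List A → A → A → Prop) (hπ : ∀ x, IsStrictTotalOrder A (π x))
    (s : List A) (hs : 1 ≤ s.length) (hprim : Primitive s)
    (x : List A)
    (i j k : ℕ) (hi : i < s.length) (hj : j < s.length) (hk : k < s.length)
    (huv : Prec π (s.rotate i) (s.rotate j))
    (hvw : Prec π (s.rotate j) (s.rotate k))
    (hxu : x <+: s.rotate i) (hxw : x <+: s.rotate k) :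
    x <+: s.rotate j :=
  main π hπ x _ _ _ huv hvw hxu hxw
end

section
/- Let s be a primitive string of length n over Σ, c ∈ Σ, and y a string with |y| < n. Then the number of cyclic rotations of s having c·y as a prefix equals the number of cyclic rotations of s having y as a prefix whose last symbol is c. -/
open scoped Classical

variable {A : Type*}

/-- for a primitive string `s`, a symbol `c` and a string `y` with
`|y| < n`, the number of cyclic rotations of `s` having `c·y` as a prefix
equals the number of cyclic rotations of `s` having `y` as a prefix whose last
symbol is `c`. -/
theorem stmt4 [Fintype A] [DecidableEq A]
    (s : List A) (hs : 1 ≤ s.length) (hprim : Primitive s)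
    (c : A) (y : List A) (hy : y.length < s.length) :
    ((Finset.range s.length).filter (fun i => (c :: y) <+: s.rotate i)).card =
    ((Finset.range s.length).filter (fun i => y <+: s.rotate i ∧
        (s.rotate i).getLast? = some c)).card := by
  have hn : 0 < s.length := hs
  apply Finset.card_bij (fun i _ => (i + 1) % s.length)
  · intro i hi
    simp only [Finset.mem_filter, Finset.mem_range] at hi ⊢
    obtain ⟨hilt, t, ht⟩ := hi
    have hrot : s.rotate ((i + 1) % s.length) = (y ++ t) ++ [c] := by
      rw [List.rotate_mod, ← List.rotate_rotate, ← ht]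
      simp [List.rotate_cons_succ]
    refine ⟨Nat.mod_lt _ hn, ?_, ?_⟩
    · rw [hrot, List.append_assoc]
      exact ⟨t ++ [c], rfl⟩
    · rw [hrot]
      exact List.getLast?_concat
  · intro a ha b hb h
    simp only [Finset.mem_filter, Finset.mem_range] at ha hb
    have ha' : (a + 1) % s.length = if a + 1 = s.length then 0 else a + 1 := by
      split
      · simp [*]
      · exact Nat.mod_eq_of_lt (by omega)
    have hb' : (b + 1) % s.length = if b + 1 = s.length then 0 else b + 1 := by
      split
      · simp [*]
      · exact Nat.mod_eq_of_lt (by omega)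
    rw [ha', hb'] at h
    split at h <;> split at h <;> omega
  · intro j hj
    simp only [Finset.mem_filter, Finset.mem_range] at hj
    obtain ⟨hjlt, hypre, hlast⟩ := hj
    refine ⟨(j + s.length - 1) % s.length, ?_, ?_⟩
    · -- membership
      have hi : s.rotate ((j + s.length - 1) % s.length)
          = s.rotate (j + s.length - 1) := List.rotate_mod _ _
      have hrot1 : (s.rotate (j + s.length - 1)).rotate 1 = s.rotate j := by
        rw [List.rotate_rotate]
        have h1 : j + s.length - 1 + 1 = j + s.length := by omega
        rw [h1, ← List.rotate_rotate]
        have hlen : (s.rotate j).length = s.length := List.length_rotate _ _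
        rw [← hlen, List.rotate_length]
      have hrlen : (s.rotate (j + s.length - 1)).length = s.length :=
        List.length_rotate _ _
      obtain ⟨a, l, hal⟩ : ∃ a l, s.rotate (j + s.length - 1) = a :: l := by
        cases h : s.rotate (j + s.length - 1) with
        | nil => rw [h] at hrlen; simp at hrlen; omega
        | cons a l => exact ⟨a, l, rfl⟩
      have hrj : s.rotate j = l ++ [a] := by
        rw [← hrot1, hal]
        simp [List.rotate_cons_succ]
      have hac : a = c := by
        rw [hrj] at hlast
        simpa [List.getLast?_concat] using hlast
      have hyl : y <+: l := by
        rw [hrj] at hypre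
        have hlenl : y.length ≤ l.length := by
          have h2 : (l ++ [a]).length = s.length := by rw [← hrj]; simp
          simp at h2
          omega
        rw [List.prefix_iff_eq_take] at hypre ⊢
        rwa [List.take_append_of_le_length hlenl] at hypre
      simp only [Finset.mem_filter, Finset.mem_range]
      refine ⟨Nat.mod_lt _ hn, ?_⟩
      rw [hi, hal]
      exact List.cons_prefix_cons.mpr ⟨hac.symm, hyl⟩
    · -- f i = j
      rw [Nat.mod_add_mod]
      have h1 : j + s.length - 1 + 1 = j + s.length := by omega
      rw [h1, Nat.add_mod_right, Nat.mod_eq_of_lt hjlt]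
end

section
/- Toehold step for local orderings: let s be a primitive string of length n over Σ whose rotation matrix is sorted by a local ordering of context length 1, let y be a string with 1 ≤ |y| < n that is a prefix of at least one rotation of s, and let v be the ≺-maximum rotation having prefix y. If the last symbol of v is c ∈ Σ, then the right shift of v is the ≺-maximum rotation having prefix c·y. -/
open scoped Classical

variable {A : Type*}

/-- The index of the right shift of the rotation `R_i` of a string of length
`n`, i.e. `(i - 1) mod n`. -/
def rshift (n i : ℕ) : ℕ := (i + n - 1) % n

theorem lcp_cons [DecidableEq A] (c : A) (l1 l2 : List A) :
    lcp (c :: l1) (c :: l2) = c :: lcp l1 l2 := by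
  simp [lcp]

theorem prefix_lcp [DecidableEq A] {y l1 l2 : List A} (h1 : y <+: l1) (h2 : y <+: l2) :
    y <+: lcp l1 l2 := by
  induction y generalizing l1 l2 with
  | nil => exact List.nil_prefix
  | cons a as ih =>
    obtain ⟨t1, rfl⟩ := h1
    obtain ⟨t2, rfl⟩ := h2
    rw [List.cons_append, List.cons_append, lcp_cons, List.cons_prefix_cons]
    exact ⟨rfl, ih (as.prefix_append t1) (as.prefix_append t2)⟩

theorem lcp_length_lt [DecidableEq A] {l1 l2 : List A} (hlen : l1.length = l2.length)
    (hne : l1 ≠ l2) : (lcp l1 l2).length < l1.length := by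
  induction l1 generalizing l2 with
  | nil => cases l2 <;> simp_all
  | cons a as ih =>
    cases l2 with
    | nil => simp at hlen
    | cons b bs =>
      by_cases hab : a = b
      · subst hab
        have hne' : as ≠ bs := by rintro rfl; exact hne rfl
        simp only [lcp, if_pos rfl, List.length_cons]
        exact Nat.succ_lt_succ (ih (by simpa using hlen) hne')
      · simp [lcp, hab]

theorem lcp_append_last [DecidableEq A] {l1 l2 : List A} (hlen : l1.length = l2.length)
    (hne : l1 ≠ l2) (c d : A) : lcp (l1 ++ [c]) (l2 ++ [d]) = lcp l1 l2 := by
  induction l1 generalizing l2 with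
  | nil =>
    cases l2 with
    | nil => exact absurd rfl hne
    | cons b bs => simp at hlen
  | cons a as ih =>
    cases l2 with
    | nil => simp at hlen
    | cons b bs =>
      by_cases hab : a = b
      · subst hab
        have hne' : as ≠ bs := by rintro rfl; exact hne rfl
        rw [List.cons_append, List.cons_append, lcp_cons, lcp_cons,
          ih (by simpa using hlen) hne']
      · simp [lcp, hab]

theorem prec_step [DecidableEq A] (π : List A → A → A → Prop)
    (hloc : ∀ (x y : List A) (c : A), π (x ++ [c]) = π (y ++ [c]))
    {u v y : List A} {c : A} (hlen : u.length = v.length) (hne : u ≠ v)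
    (hyu : y <+: u) (hyv : y <+: v) (hy : y ≠ [])
    (h : Prec π (u ++ [c]) (v ++ [c])) : Prec π (c :: u) (c :: v) := by
  obtain ⟨a, b, ha, hb, hab⟩ := h
  rw [lcp_append_last hlen hne c c] at ha hb hab
  have hlt : (lcp u v).length < u.length := lcp_length_lt hlen hne
  rw [List.getElem?_append, if_pos hlt] at ha
  rw [List.getElem?_append, if_pos (hlen ▸ hlt)] at hb
  have hLne : lcp u v ≠ [] := by
    intro h0
    have := prefix_lcp hyu hyv
    rw [h0] at this
    exact hy (List.prefix_nil.mp this)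
  obtain ⟨L, d, hL⟩ := (List.eq_nil_or_concat (lcp u v)).resolve_left hLne
  refine ⟨a, b, ?_, ?_, ?_⟩
  · rw [lcp_cons]; simpa using ha
  · rw [lcp_cons]; simpa using hb
  · rw [lcp_cons, hL, List.concat_eq_append]
    rw [show c :: (L ++ [d]) = (c :: L) ++ [d] by simp, hloc (c :: L) L d]
    rw [hL, List.concat_eq_append] at hab
    exact hab

theorem rotate_succ_of_cons {s : List A} {j : ℕ} {c : A} {rest : List A}
    (h : s.rotate j = c :: rest) : s.rotate (j + 1) = rest ++ [c] := by
  rw [← List.rotate_rotate, h]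
  rw [show (1 : ℕ) = 0 + 1 from rfl, List.rotate_cons_succ, List.rotate_zero]

/-- toehold step for local orderings of context length 1.  If
`v = s.rotate i` is the `≺`-maximum rotation having prefix `y`
(`1 ≤ |y| < n`), and `v` ends with `c`, then the right shift of `v` is the
`≺`-maximum rotation having prefix `c·y`. -/
theorem stmt12 [Fintype A] [DecidableEq A]
    (π : List A → A → A → Prop) (hπ : ∀ x, IsStrictTotalOrder A (π x))
    (hloc : ∀ (x y : List A) (c : A), π (x ++ [c]) = π (y ++ [c]))
    (s : List A) (hs : 1 ≤ s.length) (hprim : Primitive s)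
    (y : List A) (hy1 : 1 ≤ y.length) (hy2 : y.length < s.length)
    (i : ℕ) (hi : i < s.length) (hpre : y <+: s.rotate i)
    (hmax : ∀ j < s.length, y <+: s.rotate j →
      s.rotate j = s.rotate i ∨ Prec π (s.rotate j) (s.rotate i))
    (c : A) (hc : (s.rotate i).getLast? = some c) :
    (c :: y) <+: s.rotate (rshift s.length i) ∧
    ∀ j < s.length, (c :: y) <+: s.rotate j →
      s.rotate j = s.rotate (rshift s.length i) ∨
      Prec π (s.rotate j) (s.rotate (rshift s.length i)) := by
  set n := s.length with hn
  have hnpos : 0 < n := hs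
  -- v = s.rotate i = v' ++ [c]
  have hvne : s.rotate i ≠ [] := by
    intro h0; rw [h0] at hc; simp at hc
  have hvdec : (s.rotate i).dropLast ++ [c] = s.rotate i := by
    have := List.dropLast_append_getLast hvne
    rw [List.getLast?_eq_getLast hvne] at hc
    rw [Option.some_inj] at hc
    rw [hc] at this
    exact this
  set v' := (s.rotate i).dropLast with hv'
  have hv'len : v'.length = n - 1 := by
    rw [hv', List.length_dropLast, List.length_rotate]
  -- the right shift of v is c :: v'
  have hrlt : rshift n i < n := Nat.mod_lt _ hnpos
  have hrsucc : s.rotate (rshift n i + 1) = s.rotate i := by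
    have h1 : (rshift n i + 1) % n = i := by
      rw [rshift, Nat.mod_add_mod]
      have e : i + n - 1 + 1 = i + n := by omega
      rw [e, Nat.add_mod_right, Nat.mod_eq_of_lt hi]
    calc s.rotate (rshift n i + 1) = s.rotate ((rshift n i + 1) % n) := (List.rotate_mod _ _).symm
    _ = s.rotate i := by rw [h1]
  have hrne : s.rotate (rshift n i) ≠ [] := by
    intro h0
    have : (s.rotate (rshift n i)).length = n := List.length_rotate _ _
    rw [h0] at this; simp at this; omega
  obtain ⟨d, w', hw⟩ : ∃ d w', s.rotate (rshift n i) = d :: w' := by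
    cases h0 : s.rotate (rshift n i) with
    | nil => exact absurd h0 hrne
    | cons d w' => exact ⟨d, w', rfl⟩
  have hw1 : w' ++ [d] = v' ++ [c] := by
    rw [← rotate_succ_of_cons hw, hrsucc, hvdec]
  have hw2 : w' = v' ∧ d = c := by
    have hlw : w'.length = v'.length := by
      have : (s.rotate (rshift n i)).length = n := List.length_rotate _ _
      rw [hw] at this; simp at this; omega
    obtain ⟨h1, h2⟩ := List.append_inj hw1 hlw
    exact ⟨h1, by simpa using h2⟩
  have hrot : s.rotate (rshift n i) = c :: v' := by
    rw [hw, hw2.1, hw2.2]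
  -- y is a prefix of v'
  have hyv' : y <+: v' := by
    rw [List.prefix_iff_eq_take]
    have := List.prefix_iff_eq_take.mp hpre
    rw [← hvdec, List.take_append_of_le_length (by omega)] at this
    exact this
  constructor
  · rw [hrot, List.cons_prefix_cons]; exact ⟨rfl, hyv'⟩
  · intro j hj hpre'
    rw [hrot]
    -- s.rotate j = c :: rest with y <+: rest
    obtain ⟨t, ht⟩ := hpre'
    have hrj : s.rotate j = c :: (y ++ t) := by rw [← ht]; simp
    set rest := y ++ t with hrest
    have hrestlen : rest.length = n - 1 := by
      have : (s.rotate j).length = n := List.length_rotate _ _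
      rw [hrj] at this; simp at this; omega
    have hj1 : s.rotate (j + 1) = rest ++ [c] := rotate_succ_of_cons hrj
    have hj1' : s.rotate ((j + 1) % n) = rest ++ [c] := by
      rw [hn, List.rotate_mod]; exact hj1
    have hj1lt : (j + 1) % n < n := Nat.mod_lt _ hnpos
    have hyrest : y <+: rest := y.prefix_append t
    have hypre1 : y <+: s.rotate ((j + 1) % n) := by
      rw [hj1']
      exact hyrest.trans (rest.prefix_append [c])
    rcases hmax ((j + 1) % n) hj1lt hypre1 with heq | hprec
    · -- equality case: j = rshift n i
      left
      have hidx : (j + 1) % n = i := hprim _ _ hj1lt hi heq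
      have hrij : rshift n i = j := by
        rw [rshift, ← hidx]
        have e : (j + 1) % n + n - 1 = (j + 1) % n + (n - 1) := by omega
        rw [e, Nat.mod_add_mod]
        have e2 : j + 1 + (n - 1) = j + n := by omega
        rw [e2, Nat.add_mod_right, Nat.mod_eq_of_lt hj]
      rw [← hrij]
      exact hrot
    · -- Prec case
      rw [hj1', hvdec.symm] at hprec
      by_cases hrv : rest = v'
      · left; rw [hrj, hrv]
      · right
        rw [hrj]
        exact prec_step π hloc (by omega) hrv hyrest hyv'
          (by intro h0; rw [h0] at hy1; simp at hy1) hprec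
end

section
/- Invertibility of ± orderings: let π be a linear order on Σ and π^R its reversal, fix a context adaptive ordering in which π_x ∈ {π, π^R} for every string x (a ± ordering), and fix n ≥ 1. If s and t are primitive strings of length n over Σ such that BWT_*(s) = BWT_*(t) and #{u : u is a rotation of s with u ≺ s} = #{u : u is a rotation of t with u ≺ t}, then s = t. -/
open scoped Classical

variable {A : Type*}

/-- `rank π s i` is the row index of the rotation `s.rotate i` in the sorted
rotation matrix `M_*(s)`, i.e. the number of rotations that `≺`-precede it. -/
noncomputable def rank [DecidableEq A] (π : List A → A → A → Prop)
    (s : List A) (i : ℕ) : ℕ :=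
  ((Finset.range s.length).filter
    (fun j => Prec π (s.rotate j) (s.rotate i))).card

/-- `bwtStar π s` is the string `L = BWT_*(s)`: the rotation indices sorted by
their rank (i.e. by `≺`), each mapped to the last symbol of its rotation. -/
noncomputable def bwtStar [DecidableEq A] (π : List A → A → A → Prop)
    (s : List A) : List A :=
  ((List.range s.length).mergeSort
      (fun i j => rank π s i ≤ rank π s j)).filterMap
    (fun i => (s.rotate i).getLast?)

namespace Stmt16Aux

def comb : Option A → List A → List A
  | some a, p => a :: p
  | none, p => p

@[simp] theorem comb_some (a : A) (p : List A) : comb (some a) p = a :: p := rfl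

set_option linter.unusedSectionVars false
section DecEq
variable [DecidableEq A]

theorem lcp_nil_left (v : List A) : lcp ([] : List A) v = [] := by cases v <;> rfl

theorem lcp_nil_right (u : List A) : lcp u ([] : List A) = [] := by cases u <;> rfl

theorem lcp_cons (a b : A) (as bs : List A) :
    lcp (a :: as) (b :: bs) = if a = b then a :: lcp as bs else [] := rfl

theorem lcp_comm (u v : List A) : lcp u v = lcp v u := by
  induction u generalizing v with
  | nil => rw [lcp_nil_left, lcp_nil_right]
  | cons a as ih =>
    cases v with
    | nil => rw [lcp_nil_left, lcp_nil_right]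
    | cons b bs =>
      rw [lcp_cons, lcp_cons]
      by_cases h : a = b
      · subst h; simp [ih]
      · simp [h, Ne.symm h]

theorem lcp_prefix (u v : List A) : lcp u v <+: u := by
  induction u generalizing v with
  | nil => rw [lcp_nil_left]
  | cons a as ih =>
    cases v with
    | nil => rw [lcp_nil_right]; exact List.nil_prefix
    | cons b bs =>
      rw [lcp_cons]
      by_cases h : a = b
      · simpa [h] using ih bs
      · simp [h]

theorem lcp_prefix' (u v : List A) : lcp u v <+: v := by
  rw [lcp_comm]; exact lcp_prefix v u

theorem lcp_self (u : List A) : lcp u u = u := by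
  induction u with
  | nil => rw [lcp_nil_left]
  | cons a as ih => rw [lcp_cons]; simp [ih]

theorem lcp_mismatch {u v : List A} {a b : A}
    (ha : u[(lcp u v).length]? = some a) (hb : v[(lcp u v).length]? = some b) :
    a ≠ b := by
  induction u generalizing v with
  | nil => simp at ha
  | cons x as ih =>
    cases v with
    | nil => rw [lcp_nil_right] at hb; simp at hb
    | cons y bs =>
      rw [lcp_cons] at ha hb
      by_cases h : x = y
      · subst h
        rw [if_pos rfl, List.length_cons, List.getElem?_cons_succ] at ha hb
        exact ih ha hb
      · simp only [if_neg h, List.length_nil, List.getElem?_cons_zero] at ha hb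
        rw [Option.some_inj] at ha hb
        rw [← ha, ← hb]; exact h

theorem prefix_getElem? {x u : List A} (h : x <+: u) {i : ℕ} (hi : i < x.length) :
    u[i]? = x[i]? := by
  obtain ⟨r, rfl⟩ := h
  rw [List.getElem?_append_left hi]

theorem lcp_eq_of {x u w : List A} (hxu : x <+: u) (hxw : x <+: w)
    (hm : ∀ e : A, u[x.length]? = some e → w[x.length]? = some e → False) :
    lcp u w = x := by
  induction x generalizing u w with
  | nil =>
    cases u with
    | nil => rw [lcp_nil_left]
    | cons a as =>
      cases w with
      | nil => rw [lcp_nil_right]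
      | cons b bs =>
        rw [lcp_cons, if_neg]
        intro h
        exact hm a (by simp) (by simp [h])
  | cons c x' ih =>
    obtain ⟨ru, rfl⟩ := hxu
    obtain ⟨rw', rfl⟩ := hxw
    rw [List.cons_append, List.cons_append, lcp_cons, if_pos rfl]
    congr 1
    exact ih (List.prefix_append _ _) (List.prefix_append _ _)
      (fun e h1 h2 => hm e (by simpa using h1) (by simpa using h2))

end DecEq

section Prec
variable [DecidableEq A] {P : List A → A → A → Prop}

theorem prec_irrefl (u : List A) : ¬ Prec P u u := by
  rintro ⟨a, b, ha, -, -⟩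
  rw [lcp_self] at ha
  rw [List.getElem?_eq_none (le_refl u.length)] at ha
  simp at ha

theorem prec_asymm (hPas : ∀ x (a b : A), P x a b → P x b a → False)
    {u v : List A} (h1 : Prec P u v) (h2 : Prec P v u) : False := by
  obtain ⟨a, b, ha, hb, hab⟩ := h1
  obtain ⟨c, d, hc, hd, hcd⟩ := h2
  rw [lcp_comm v u] at hc hd hcd
  rw [ha] at hd; rw [hb] at hc
  rw [Option.some_inj] at hc hd
  subst hc; subst hd
  exact hPas _ _ _ hab hcd

theorem prec_total (hPtot : ∀ x (a b : A), a ≠ b → P x a b ∨ P x b a)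
    {u v : List A} (hlen : u.length = v.length) (hne : u ≠ v) :
    Prec P u v ∨ Prec P v u := by
  have hxu := lcp_prefix u v
  have hxv := lcp_prefix' u v
  have hlt : (lcp u v).length < u.length := by
    rcases lt_or_eq_of_le hxu.length_le with h | h
    · exact h
    · exfalso
      have h1 : lcp u v = u := hxu.eq_of_length h
      have h2 : lcp u v = v := hxv.eq_of_length (by rw [h, hlen])
      exact hne (h1.symm.trans h2)
  have hltv : (lcp u v).length < v.length := hlen ▸ hlt
  have ha : u[(lcp u v).length]? = some (u[(lcp u v).length]'hlt) :=
    List.getElem?_eq_getElem hlt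
  have hb : v[(lcp u v).length]? = some (v[(lcp u v).length]'hltv) :=
    List.getElem?_eq_getElem hltv
  rcases hPtot (lcp u v) _ _ (lcp_mismatch ha hb) with h | h
  · exact Or.inl ⟨_, _, ha, hb, h⟩
  · exact Or.inr ⟨_, _, by rw [lcp_comm]; exact hb, by rw [lcp_comm]; exact ha,
      by rw [lcp_comm]; exact h⟩

theorem prec_trans (hPt : ∀ x (a b c : A), P x a b → P x b c → P x a c)
    (hPas : ∀ x (a b : A), P x a b → P x b a → False)
    {u v w : List A} (h1 : Prec P u v) (h2 : Prec P v w) : Prec P u w := by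
  obtain ⟨a, b, ha, hb, hab⟩ := h1
  obtain ⟨c, d, hc, hd, hcd⟩ := h2
  have hxu : lcp u v <+: u := lcp_prefix u v
  have hxv : lcp u v <+: v := lcp_prefix' u v
  have hyv : lcp v w <+: v := lcp_prefix v w
  have hyw : lcp v w <+: w := lcp_prefix' v w
  have hab' : a ≠ b := lcp_mismatch ha hb
  have hcd' : c ≠ d := lcp_mismatch hc hd
  have hxt : lcp u v = v.take (lcp u v).length := List.prefix_iff_eq_take.mp hxv
  have hyt : lcp v w = v.take (lcp v w).length := List.prefix_iff_eq_take.mp hyv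
  rcases lt_trichotomy (lcp u v).length (lcp v w).length with hl | hl | hl
  · -- mismatch of u,v happens before that of v,w : lcp u w = lcp u v
    have hvw : v.take (lcp u v).length = w.take (lcp u v).length := by
      calc v.take (lcp u v).length
          = (v.take (lcp v w).length).take (lcp u v).length := by
            rw [List.take_take, min_eq_left hl.le]
        _ = (w.take (lcp v w).length).take (lcp u v).length := by
            rw [← hyt, ← List.prefix_iff_eq_take.mp hyw]
        _ = w.take (lcp u v).length := by rw [List.take_take, min_eq_left hl.le]
    have hxw : lcp u v <+: w := by
      rw [List.prefix_iff_eq_take, ← hvw, ← hxt]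
    have hbw : w[(lcp u v).length]? = some b := by
      rw [prefix_getElem? hyw hl, ← prefix_getElem? hyv hl]; exact hb
    have hl' : lcp u w = lcp u v :=
      lcp_eq_of hxu hxw (fun e h1 h2 => by
        rw [ha, Option.some_inj] at h1; rw [hbw, Option.some_inj] at h2
        exact hab' (h1.symm ▸ h2.symm ▸ rfl))
    exact ⟨a, b, by rw [hl']; exact ha, by rw [hl']; exact hbw, by rw [hl']; exact hab⟩
  · -- equal mismatch positions
    have hxy : lcp u v = lcp v w := by rw [hxt, hyt, hl]
    have hbc : b = c := by
      rw [hxy] at hb; rw [hb, Option.some_inj] at hc; exact hc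
    have hbd : P (lcp u v) b d := by rw [← hxy, ← hbc] at hcd; exact hcd
    have had : a ≠ d := by
      rintro rfl; exact hPas _ _ _ hab hbd
    have hdw : w[(lcp u v).length]? = some d := by rw [hxy]; exact hd
    have hxw : lcp u v <+: w := hxy ▸ hyw
    have hl' : lcp u w = lcp u v :=
      lcp_eq_of hxu hxw (fun e h1 h2 => by
        rw [ha, Option.some_inj] at h1; rw [hdw, Option.some_inj] at h2
        exact had (h1.symm ▸ h2.symm ▸ rfl))
    exact ⟨a, d, by rw [hl']; exact ha, by rw [hl']; exact hdw,
      by rw [hl']; exact hPt _ _ _ _ hab hbd⟩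
  · -- mismatch of v,w happens before that of u,v : lcp u w = lcp v w
    have huv : u.take (lcp v w).length = v.take (lcp v w).length := by
      calc u.take (lcp v w).length
          = (u.take (lcp u v).length).take (lcp v w).length := by
            rw [List.take_take, min_eq_left hl.le]
        _ = (v.take (lcp u v).length).take (lcp v w).length := by
            rw [← List.prefix_iff_eq_take.mp hxu, ← hxt]
        _ = v.take (lcp v w).length := by rw [List.take_take, min_eq_left hl.le]
    have hyu : lcp v w <+: u := by
      rw [List.prefix_iff_eq_take, huv, ← hyt]
    have hcu : u[(lcp v w).length]? = some c := by
      rw [prefix_getElem? hxu hl, ← prefix_getElem? hxv hl]; exact hc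
    have hl' : lcp u w = lcp v w :=
      lcp_eq_of hyu hyw (fun e h1 h2 => by
        rw [hcu, Option.some_inj] at h1; rw [hd, Option.some_inj] at h2
        exact hcd' (h1.symm ▸ h2.symm ▸ rfl))
    exact ⟨c, d, by rw [hl']; exact hcu, by rw [hl']; exact hd, by rw [hl']; exact hcd⟩

theorem prec_take (m : ℕ) {u v : List A} (h : Prec P u v) :
    u.take m = v.take m ∨ Prec P (u.take m) (v.take m) := by
  obtain ⟨a, b, ha, hb, hab⟩ := h
  have hxu : lcp u v = u.take (lcp u v).length :=
    List.prefix_iff_eq_take.mp (lcp_prefix u v)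
  have hxv : lcp u v = v.take (lcp u v).length :=
    List.prefix_iff_eq_take.mp (lcp_prefix' u v)
  by_cases hm : m ≤ (lcp u v).length
  · left
    calc u.take m = (u.take (lcp u v).length).take m := by
          rw [List.take_take, min_eq_left hm]
      _ = (v.take (lcp u v).length).take m := by rw [← hxu, ← hxv]
      _ = v.take m := by rw [List.take_take, min_eq_left hm]
  · right
    push_neg at hm
    have hpu : lcp u v <+: u.take m := by
      rw [List.prefix_iff_eq_take, List.take_take, min_eq_left hm.le, ← hxu]
    have hpv : lcp u v <+: v.take m := by
      rw [List.prefix_iff_eq_take, List.take_take, min_eq_left hm.le, ← hxv]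
    have ha' : (u.take m)[(lcp u v).length]? = some a := by
      rw [List.getElem?_take_of_lt hm]; exact ha
    have hb' : (v.take m)[(lcp u v).length]? = some b := by
      rw [List.getElem?_take_of_lt hm]; exact hb
    have hl' : lcp (u.take m) (v.take m) = lcp u v :=
      lcp_eq_of hpu hpv (fun e h1 h2 => by
        rw [ha', Option.some_inj] at h1; rw [hb', Option.some_inj] at h2
        exact (lcp_mismatch ha hb) (h1.symm ▸ h2.symm ▸ rfl))
    exact ⟨a, b, by rw [hl']; exact ha', by rw [hl']; exact hb', by rw [hl']; exact hab⟩

end Prec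

/-! ### generic list helpers -/

theorem map_pair_eq {α β γ δ : Type*} (f1 : α → β) (f2 : α → γ) (g : β → γ → δ) :
    ∀ (l1 l2 : List α), l1.map f1 = l2.map f1 → l1.map f2 = l2.map f2 →
      l1.map (fun x => g (f1 x) (f2 x)) = l2.map (fun x => g (f1 x) (f2 x))
  | [], [], _, _ => rfl
  | [], _ :: _, h1, _ => by simp at h1
  | _ :: _, [], h1, _ => by simp at h1
  | a :: l1, b :: l2, h1, h2 => by
    simp only [List.map_cons, List.cons.injEq] at h1 h2 ⊢
    exact ⟨by rw [h1.1, h2.1], map_pair_eq f1 f2 g l1 l2 h1.2 h2.2⟩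

theorem map_getLast?_eq {α : Type*} :
    ∀ (M : List (List α)), (∀ u ∈ M, u ≠ []) →
      M.map List.getLast? = (M.filterMap List.getLast?).map some
  | [], _ => rfl
  | u :: M, h => by
    have hu : u.getLast? = some (u.getLast (h u (by simp))) :=
      List.getLast?_eq_getLast_of_ne_nil _
    rw [List.map_cons, List.filterMap_cons_some hu, List.map_cons, hu]
    rw [map_getLast?_eq M (fun v hv => h v (by simp [hv]))]

theorem rotate_one_inj {α : Type*} {u v : List α} (h : u.rotate 1 = v.rotate 1) : u = v := by
  have hlen : u.length = v.length := by
    have := congrArg List.length h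
    simpa using this
  have key : ∀ (l : List α), (l.rotate 1).rotate (l.length - 1) = l := by
    intro l
    cases l with
    | nil => simp
    | cons a l =>
      rw [List.rotate_rotate]
      have : 1 + ((a :: l).length - 1) = (a :: l).length := by
        rw [List.length_cons]; omega
      rw [this, List.rotate_length]
  calc u = (u.rotate 1).rotate (u.length - 1) := (key u).symm
    _ = (v.rotate 1).rotate (v.length - 1) := by rw [h, hlen]
    _ = v := key v

theorem comb_rotate_one {α : Type*} {u : List α} (hu : u ≠ []) :
    (comb u.getLast? u.dropLast).rotate 1 = u := by
  rw [List.getLast?_eq_getLast_of_ne_nil hu, comb_some]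
  rw [show (1 : ℕ) = 0 + 1 from rfl, List.rotate_cons_succ, List.rotate_zero]
  exact List.dropLast_append_getLast hu

theorem comb_rotate {s : List A} (hs : s ≠ []) (i : ℕ) :
    comb ((s.rotate i).getLast?) ((s.rotate i).dropLast) = s.rotate (i + (s.length - 1)) := by
  apply rotate_one_inj
  have h1 : s.rotate i ≠ [] := by
    intro h; apply hs
    have := congrArg List.length h
    simpa [List.length_rotate] using this
  rw [comb_rotate_one h1, List.rotate_rotate]
  have : i + (s.length - 1) + 1 = i + s.length := by
    have : 1 ≤ s.length := List.length_pos_iff.mpr hs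
    omega
  rw [this, ← List.rotate_rotate, ← List.length_rotate s i, List.rotate_length]

theorem comb_take {α : Type*} {u : List α} (hu : u ≠ []) {k : ℕ} (hk : k + 1 ≤ u.length) :
    (comb u.getLast? u.dropLast).take (k + 1) = comb u.getLast? (u.take k) := by
  rw [List.getLast?_eq_getLast_of_ne_nil hu]
  show (u.getLast hu :: u.dropLast).take (k + 1) = u.getLast hu :: u.take k
  rw [List.take_succ_cons]
  congr 1
  rw [List.dropLast_eq_take, List.take_take, min_eq_left (by omega)]

theorem map_add_mod_perm (n : ℕ) (hn : 1 ≤ n) :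
    List.Perm ((List.range n).map (fun i => (i + (n - 1)) % n)) (List.range n) := by
  have hn0 : 0 < n := hn
  apply (List.perm_ext_iff_of_nodup ?_ List.nodup_range).mpr
  · intro a
    simp only [List.mem_map, List.mem_range]
    constructor
    · rintro ⟨i, -, rfl⟩; exact Nat.mod_lt _ hn0
    · intro ha
      refine ⟨(a + 1) % n, Nat.mod_lt _ hn0, ?_⟩
      rw [Nat.mod_add_mod]
      have : a + 1 + (n - 1) = a + n := by omega
      rw [this, Nat.add_mod_right, Nat.mod_eq_of_lt ha]
  · apply List.Nodup.map_on (l := List.range n) ?_ List.nodup_range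
    intro i hi j hj hij
    rw [List.mem_range] at hi hj
    have h1 : i ≡ j [MOD n] := Nat.ModEq.add_right_cancel' (n - 1) hij
    rwa [Nat.ModEq, Nat.mod_eq_of_lt hi, Nat.mod_eq_of_lt hj] at h1

theorem countP_inj {α : Type*} {r : α → α → Prop}
    (hasym : ∀ a b, r a b → r b a → False) :
    ∀ {M : List α} {u w : α}, M.Pairwise r → u ∈ M → w ∈ M →
      M.countP (fun v => decide (r v u)) = M.countP (fun v => decide (r v w)) → u = w := by
  intro M
  induction M with
  | nil => intro u w _ hu; simp at hu
  | cons v M ih =>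
    intro u w hp hu hw hcnt
    rw [List.pairwise_cons] at hp
    have key : ∀ z, z ∈ v :: M → z ≠ v →
        M.countP (fun x => decide (r x z)) + 1 = (v :: M).countP (fun x => decide (r x z)) := by
      intro z hz hzv
      have hz' : z ∈ M := by
        rcases hz with _ | h
        · exact absurd rfl hzv
        · assumption
      rw [List.countP_cons]
      have : r v z := hp.1 z hz'
      simp [this]
    have zero : ∀ z, z ∈ v :: M → z = v →
        (v :: M).countP (fun x => decide (r x z)) = 0 := by
      intro z _ hzv
      subst hzv
      rw [List.countP_cons]
      have h0 : ¬ r z z := fun h => hasym _ _ h h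
      have hz : List.countP (fun x => decide (r x z)) M = 0 := by
        rw [List.countP_eq_zero]
        intro x hx
        simp only [decide_eq_true_eq]
        exact fun h => hasym _ _ h (hp.1 x hx)
      simp [h0, hz]
    rcases eq_or_ne u v with huv | huv <;> rcases eq_or_ne w v with hwv | hwv
    · rw [huv, hwv]
    · exfalso
      rw [zero u (by simp [huv]) huv, ← key w hw hwv] at hcnt
      omega
    · exfalso
      rw [zero w (by simp [hwv]) hwv, ← key u hu huv] at hcnt
      omega
    · have hu' : u ∈ M := by
        rcases hu with _ | h
        · exact absurd rfl huv
        · assumption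
      have hw' : w ∈ M := by
        rcases hw with _ | h
        · exact absurd rfl hwv
        · assumption
      apply ih hp.2 hu' hw'
      rw [← key u hu huv, ← key w hw hwv] at hcnt
      omega

section Rank
variable [DecidableEq A] {P : List A → A → A → Prop}

theorem rank_lt_of_prec
    (hPt : ∀ x (a b c : A), P x a b → P x b c → P x a c)
    (hPas : ∀ x (a b : A), P x a b → P x b a → False)
    (s : List A) {i j : ℕ} (hi : i < s.length)
    (h : Prec P (s.rotate i) (s.rotate j)) :
    rank P s i < rank P s j := by
  unfold rank
  have hsub : (Finset.range s.length).filter (fun w => Prec P (s.rotate w) (s.rotate i)) ⊆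
      (Finset.range s.length).filter (fun w => Prec P (s.rotate w) (s.rotate j)) := by
    intro w hw
    rw [Finset.mem_filter] at hw ⊢
    exact ⟨hw.1, prec_trans hPt hPas hw.2 h⟩
  apply Finset.card_lt_card
  rw [Finset.ssubset_iff_of_subset hsub]
  exact ⟨i, Finset.mem_filter.mpr ⟨Finset.mem_range.mpr hi, h⟩,
    fun hmem => prec_irrefl _ ((Finset.mem_filter.mp hmem).2)⟩

theorem matrix_facts
    (hPt : ∀ x (a b c : A), P x a b → P x b c → P x a c)
    (hPas : ∀ x (a b : A), P x a b → P x b a → False)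
    (hPtot : ∀ x (a b : A), a ≠ b → P x a b ∨ P x b a)
    (n : ℕ) (hn : 1 ≤ n) (s : List A) (hslen : s.length = n) (hsprim : Primitive s) :
    ∃ Ms : List (List A),
      Ms.Pairwise (Prec P) ∧
      (∀ u ∈ Ms, u.length = n) ∧
      List.Perm (Ms.map (fun u => comb u.getLast? u.dropLast)) Ms ∧
      (bwtStar P s).map some = Ms.map List.getLast? ∧
      Ms.length = n ∧
      s ∈ Ms ∧
      List.countP (fun v => decide (Prec P v s)) Ms = rank P s 0 := by
  subst hslen
  have hs0 : s ≠ [] := by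
    intro h; rw [h] at hn; simp at hn
  set ls := (List.range s.length).mergeSort (fun i j => rank P s i ≤ rank P s j) with hls
  have hperm : List.Perm ls (List.range s.length) := List.mergeSort_perm _ _
  have hsorted : ls.Pairwise (fun i j => rank P s i ≤ rank P s j) := by
    have h := List.pairwise_mergeSort
      (le := fun i j => decide (rank P s i ≤ rank P s j))
      (fun a b c h1 h2 => by
        simp only [decide_eq_true_eq] at *; omega)
      (fun a b => by simpa using Nat.le_total (rank P s a) (rank P s b))
      (List.range s.length)
    rw [← hls] at h
    exact h.imp (fun h => by simpa using h)
  have hmem : ∀ i ∈ ls, i < s.length := fun i hi =>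
    List.mem_range.mp (hperm.mem_iff.mp hi)
  have hnd : ls.Nodup := hperm.nodup_iff.mpr List.nodup_range
  set Ms := ls.map (s.rotate ·) with hMs
  have hMsPrec : Ms.Pairwise (Prec P) := by
    rw [hMs, List.pairwise_map]
    refine (hsorted.and hnd).imp_of_mem ?_
    rintro i j hi hj ⟨hle, hne⟩
    have hi' : i < s.length := hmem i hi
    have hj' : j < s.length := hmem j hj
    have hrot : s.rotate i ≠ s.rotate j := fun he => hne (hsprim i j hi' hj' he)
    rcases prec_total hPtot (by simp [List.length_rotate]) hrot with h | h
    · exact h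
    · exact absurd hle (not_le.mpr (rank_lt_of_prec hPt hPas s hj' h))
  have hlenM : ∀ u ∈ Ms, u.length = s.length := by
    intro u hu
    rw [hMs] at hu
    obtain ⟨i, -, rfl⟩ := List.mem_map.mp hu
    simp [List.length_rotate]
  have hcombperm : List.Perm (Ms.map (fun u => comb u.getLast? u.dropLast)) Ms := by
    have h1 : Ms.map (fun u => comb u.getLast? u.dropLast)
        = (ls.map (fun i => (i + (s.length - 1)) % s.length)).map (s.rotate ·) := by
      rw [hMs, List.map_map, List.map_map]
      apply List.map_congr_left
      intro i _
      show comb ((s.rotate i).getLast?) ((s.rotate i).dropLast)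
        = s.rotate ((i + (s.length - 1)) % s.length)
      rw [comb_rotate hs0 i, List.rotate_mod]
    rw [h1, hMs]
    refine List.Perm.map _ ?_
    exact ((hperm.map _).trans (map_add_mod_perm s.length hn)).trans hperm.symm
  have hbwtM : (bwtStar P s).map some = Ms.map List.getLast? := by
    have h1 : bwtStar P s = Ms.filterMap List.getLast? := by
      unfold bwtStar
      rw [← hls, hMs, List.filterMap_map]
      rfl
    rw [h1, ← map_getLast?_eq]
    intro u hu
    have := hlenM u hu
    intro he
    rw [he] at this
    simp at this
    omega
  have hlength : Ms.length = s.length := by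
    rw [hMs, List.length_map, hperm.length_eq, List.length_range]
  have hsmem : s ∈ Ms := by
    have h0 : (0 : ℕ) ∈ ls := hperm.mem_iff.mpr (List.mem_range.mpr hn)
    rw [hMs]
    exact List.mem_map.mpr ⟨0, h0, List.rotate_zero s⟩
  refine ⟨Ms, hMsPrec, hlenM, hcombperm, hbwtM, hlength, hsmem, ?_⟩
  have e1 : rank P s 0
      = List.countP (fun j => decide (Prec P (s.rotate j) (s.rotate 0))) (List.range s.length) := by
    rw [rank, List.countP_eq_length_filter]
    rfl
  rw [e1, ← hperm.countP_eq, hMs, List.countP_map]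
  simp only [List.rotate_zero]
  rfl

end Rank
end Stmt16Aux

/-- invertibility of ± orderings.  Fix a linear order `π` on `Σ`
and a context adaptive ordering `P` with `P x ∈ {π, π^R}` for every string `x`.
If two primitive strings of the same length `n ≥ 1` have the same transform
`BWT_*` and occupy the same row index in their respective sorted rotation
matrices, then they are equal. -/
theorem stmt16 [Fintype A] [DecidableEq A]
    (π : A → A → Prop) (hπ : IsStrictTotalOrder A π)
    (P : List A → A → A → Prop)
    (hpm : ∀ x : List A, P x = π ∨ P x = fun a b => π b a)
    (n : ℕ) (hn : 1 ≤ n)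
    (s t : List A) (hslen : s.length = n) (htlen : t.length = n)
    (hsprim : Primitive s) (htprim : Primitive t)
    (hbwt : bwtStar P s = bwtStar P t)
    (hrow : ((Finset.range s.length).filter
              (fun i => Prec P (s.rotate i) s)).card =
            ((Finset.range t.length).filter
              (fun i => Prec P (t.rotate i) t)).card) :
    s = t := by
  have htr : ∀ a b c : A, π a b → π b c → π a c :=
    fun a b c => hπ.toIsStrictOrder.toIsTrans.trans a b c
  have hirr : ∀ a : A, ¬ π a a := hπ.toIsStrictOrder.toIrrefl.irrefl
  have htri : ∀ a b : A, π a b ∨ a = b ∨ π b a := fun a b => by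
    by_cases h1 : π a b
    · exact Or.inl h1
    by_cases h2 : π b a
    · exact Or.inr (Or.inr h2)
    exact Or.inr (Or.inl (hπ.toTrichotomous.trichotomous a b h1 h2))
  have hPt : ∀ x (a b c : A), P x a b → P x b c → P x a c := by
    intro x a b c h1 h2
    rcases hpm x with h | h <;> rw [h] at h1 h2 ⊢
    · exact htr a b c h1 h2
    · exact htr c b a h2 h1
  have hPas : ∀ x (a b : A), P x a b → P x b a → False := by
    intro x a b h1 h2
    rcases hpm x with h | h <;> rw [h] at h1 h2
    · exact hirr a (htr a b a h1 h2)
    · exact hirr a (htr a b a h2 h1)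
  have hPtot : ∀ x (a b : A), a ≠ b → P x a b ∨ P x b a := by
    intro x a b hab
    rcases hpm x with h | h <;> rw [h]
    · rcases htri a b with h' | h' | h'
      · exact Or.inl h'
      · exact absurd h' hab
      · exact Or.inr h'
    · rcases htri b a with h' | h' | h'
      · exact Or.inl h'
      · exact absurd h'.symm hab
      · exact Or.inr h'
  obtain ⟨Ms, hMsP, hMslen, hMscomb, hMsbwt, hMsl, hsmem, hscnt⟩ :=
    Stmt16Aux.matrix_facts hPt hPas hPtot n hn s hslen hsprim
  obtain ⟨Mt, hMtP, hMtlen, hMtcomb, hMtbwt, hMtl, htmem, htcnt⟩ :=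
    Stmt16Aux.matrix_facts hPt hPas hPtot n hn t htlen htprim
  have hlast : Ms.map List.getLast? = Mt.map List.getLast? := by
    rw [← hMsbwt, ← hMtbwt, hbwt]
  have hne : ∀ (M : List (List A)), (∀ u ∈ M, u.length = n) → ∀ u ∈ M, u ≠ [] := by
    intro M hM u hu h
    have := hM u hu
    rw [h] at this
    simp at this
    omega
  haveI : IsAntisymm (List A) (fun u v => u = v ∨ Prec P u v) := ⟨by
    rintro a b h1 h2
    rcases h1 with rfl | h1
    · rfl
    rcases h2 with rfl | h2
    · rfl
    exact (Stmt16Aux.prec_asymm hPas h1 h2).elim⟩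
  have key : ∀ k, k ≤ n → Ms.map (List.take k) = Mt.map (List.take k) := by
    intro k
    induction k with
    | zero =>
      intro _
      have h1 : ∀ (M : List (List A)), M.map (List.take 0) = List.replicate M.length [] := by
        intro M
        rw [show (List.take 0 : List A → List A) = fun _ => ([] : List A) from
          funext (fun u => List.take_zero (l := u))]
        exact List.map_const' (l := M) (b := [])
      rw [h1, h1, hMsl, hMtl]
    | succ k ih =>
      intro hk1
      have hTk := ih (by omega)
      have hpoint : ∀ (M : List (List A)), (∀ u ∈ M, u.length = n) →
          M.map (List.take (k+1) ∘ (fun u => Stmt16Aux.comb u.getLast? u.dropLast))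
            = M.map (fun u => Stmt16Aux.comb u.getLast? (u.take k)) := by
        intro M hM
        apply List.map_congr_left
        intro u hu
        exact Stmt16Aux.comb_take (hne M hM u hu) (by rw [hM u hu]; omega)
      have hps : List.Perm (Ms.map (List.take (k+1)))
          (Ms.map (fun u => Stmt16Aux.comb u.getLast? (u.take k))) := by
        have h1 := (hMscomb.symm).map (List.take (k+1))
        rw [List.map_map, hpoint Ms hMslen] at h1
        exact h1
      have hpt : List.Perm (Mt.map (List.take (k+1)))
          (Mt.map (fun u => Stmt16Aux.comb u.getLast? (u.take k))) := by
        have h1 := (hMtcomb.symm).map (List.take (k+1))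
        rw [List.map_map, hpoint Mt hMtlen] at h1
        exact h1
      have hcm : Ms.map (fun u => Stmt16Aux.comb u.getLast? (u.take k))
          = Mt.map (fun u => Stmt16Aux.comb u.getLast? (u.take k)) :=
        Stmt16Aux.map_pair_eq List.getLast? (List.take k) Stmt16Aux.comb Ms Mt hlast hTk
      have hperm : List.Perm (Ms.map (List.take (k+1))) (Mt.map (List.take (k+1))) :=
        (hps.trans (hcm ▸ List.Perm.refl _)).trans hpt.symm
      have hs1 : (Ms.map (List.take (k+1))).Pairwise (fun u v => u = v ∨ Prec P u v) := by
        rw [List.pairwise_map]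
        exact hMsP.imp (fun h => Stmt16Aux.prec_take _ h)
      have hs2 : (Mt.map (List.take (k+1))).Pairwise (fun u v => u = v ∨ Prec P u v) := by
        rw [List.pairwise_map]
        exact hMtP.imp (fun h => Stmt16Aux.prec_take _ h)
      exact List.Perm.eq_of_pairwise (fun a b _ _ h1 h2 => antisymm h1 h2) hs1 hs2 hperm
  have hM : Ms = Mt := by
    have h := key n le_rfl
    have e : ∀ (M : List (List A)), (∀ u ∈ M, u.length = n) → M.map (List.take n) = M := by
      intro M hM
      conv_rhs => rw [← List.map_id M]
      apply List.map_congr_left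
      intro u hu
      rw [List.take_of_length_le (le_of_eq (hM u hu))]
      rfl
    rwa [e Ms hMslen, e Mt hMtlen] at h
  have hranks : rank P s 0 = rank P t 0 := by
    unfold rank
    simp only [List.rotate_zero]
    exact hrow
  have htmem' : t ∈ Ms := by rw [hM]; exact htmem
  have hcnt2 : List.countP (fun v => decide (Prec P v s)) Ms
      = List.countP (fun v => decide (Prec P v t)) Ms := by
    rw [hscnt, hM, htcnt, hranks]
  exact Stmt16Aux.countP_inj (fun a b h1 h2 => Stmt16Aux.prec_asymm hPas h1 h2)
    hMsP hsmem htmem' hcnt2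
end
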